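/- arXiv:1408.5060 — 4 statements merged into one kernel-verified Lean document; each statement's English description precedes it below -/
import Mathlib

section
/- Under Conditions (C1)–(C3) on the norm ‖·‖_m: the set Ω₀ = {v ∈ [0,1] : τ(v) = 1} is a nonempty closed subinterval [v′, v″] of [1/2, 1] with v″ > 1/2; τ(v) > 1 for every v < 1/2; and τ is strictly decreasing on [0, v′] and strictly increasing on [v″, 1]. -/
open Set

open scoped ENNReal

noncomputable section

/-- `N` is a norm on `ℝ²`, viewed as a two-argument function. -/
def IsNorm2 (N : ℝ → ℝ → ℝ) : Prop :=
  (∀ x y, 0 ≤ N x y) ∧ (∀ x y, N x y = 0 ↔ x = 0 ∧ y = 0) ∧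
    (∀ c x y, N (c * x) (c * y) = |c| * N x y) ∧
    (∀ x₁ y₁ x₂ y₂, N (x₁ + x₂) (y₁ + y₂) ≤ N x₁ y₁ + N x₂ y₂)

/-- Condition (C1): symmetry of the norm. -/
def CondC1 (N : ℝ → ℝ → ℝ) : Prop := ∀ x y, N x y = N y x

/-- Condition (C2): the norm dominates the sup-norm. -/
def CondC2 (N : ℝ → ℝ → ℝ) : Prop := ∀ x y : ℝ, max |x| |y| ≤ N x y

/-- Condition (C3): equality with the sup-norm off the diagonal. -/
def CondC3 (N : ℝ → ℝ → ℝ) : Prop :=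
  ∃ x₀ y₀ : ℝ, 0 ≤ x₀ ∧ 0 ≤ y₀ ∧ x₀ ≠ y₀ ∧ N x₀ y₀ = max x₀ y₀

/-- The extended-real-valued function `τ : [0,1] → [1,∞]`,
`τ(v) = ‖(v, 1−v)‖_m / v`, with `τ(0) = +∞`. -/
def tauE (N : ℝ → ℝ → ℝ) (v : ℝ) : ℝ≥0∞ :=
  if v = 0 then ⊤ else ENNReal.ofReal (N v (1 - v) / v)

/-- `Ω₀ = {v ∈ [0,1] : τ(v) = 1}`. -/
def Omega0E (N : ℝ → ℝ → ℝ) : Set ℝ := {v | v ∈ Set.Icc (0:ℝ) 1 ∧ tauE N v = 1}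

section Aux

variable {N : ℝ → ℝ → ℝ}

lemma homog_nonneg (hN : IsNorm2 N) {c : ℝ} (hc : 0 ≤ c) (x y : ℝ) :
    N (c * x) (c * y) = c * N x y := by
  rw [hN.2.2.1, abs_of_nonneg hc]

lemma conv_ineq (hN : IsNorm2 N) {s t : ℝ} (hs : 0 ≤ s) (ht : 0 ≤ t)
    (x₁ y₁ x₂ y₂ : ℝ) :
    N (s*x₁ + t*x₂) (s*y₁ + t*y₂) ≤ s * N x₁ y₁ + t * N x₂ y₂ := by
  calc N (s*x₁ + t*x₂) (s*y₁ + t*y₂) ≤ N (s*x₁) (s*y₁) + N (t*x₂) (t*y₂) :=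
        hN.2.2.2 _ _ _ _
  _ = s * N x₁ y₁ + t * N x₂ y₂ := by rw [homog_nonneg hN hs, homog_nonneg hN ht]

lemma g_cont (hN : IsNorm2 N) : Continuous (fun v : ℝ => N v (1 - v)) := by
  have key : ∀ a b : ℝ, N a (1-a) - N b (1-b) ≤ |a - b| * N 1 (-1) := by
    intro a b
    have h1 := hN.2.2.2 b (1-b) (a-b) ((1-a)-(1-b))
    rw [show b + (a-b) = a from by ring, show (1-b) + ((1-a)-(1-b)) = 1-a from by ring] at h1
    have h2 := hN.2.2.1 (a-b) 1 (-1)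
    rw [show (a-b)*1 = a-b from by ring, show (a-b)*(-1) = (1-a)-(1-b) from by ring] at h2
    linarith
  apply (LipschitzWith.of_dist_le_mul (K := (N 1 (-1)).toNNReal) ?_).continuous
  intro a b
  rw [Real.dist_eq, Real.dist_eq]
  have hK : ((N 1 (-1)).toNNReal : ℝ) = N 1 (-1) := Real.coe_toNNReal _ (hN.1 1 (-1))
  rw [hK, abs_sub_le_iff]
  constructor
  · have := key a b; linarith [mul_comm |a - b| (N 1 (-1))]
  · have := key b a
    rw [abs_sub_comm b a] at this
    linarith [mul_comm |a - b| (N 1 (-1))]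

lemma scale (hN : IsNorm2 N) {v : ℝ} (hv : 0 < v) :
    N v (1 - v) = v * N 1 ((1-v)/v) := by
  have h := homog_nonneg hN hv.le 1 ((1-v)/v)
  rw [mul_one, show v * ((1-v)/v) = 1 - v from by field_simp] at h
  exact h

lemma tau_eq (hN : IsNorm2 N) {v : ℝ} (hv : 0 < v) :
    tauE N v = ENNReal.ofReal (N 1 ((1-v)/v)) := by
  rw [tauE, if_neg hv.ne', scale hN hv, mul_comm, mul_div_assoc, div_self hv.ne', mul_one]

lemma mem_omega_iff (hN : IsNorm2 N) (hC2 : CondC2 N) {v : ℝ} :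
    v ∈ Omega0E N ↔ v ∈ Icc (1/2 : ℝ) 1 ∧ N v (1 - v) = v := by
  constructor
  · rintro ⟨⟨h0, h1⟩, ht⟩
    have hv : v ≠ 0 := by
      rintro rfl
      rw [tauE, if_pos rfl] at ht
      exact (by simp : (⊤:ℝ≥0∞) ≠ 1) ht
    have hv0 : 0 < v := lt_of_le_of_ne h0 (Ne.symm hv)
    rw [tauE, if_neg hv, ENNReal.ofReal_eq_one, div_eq_one_iff_eq hv] at ht
    have hmax := hC2 v (1-v)
    rw [ht] at hmax
    refine ⟨⟨?_, h1⟩, ht⟩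
    have := le_trans (le_trans (le_abs_self (1-v)) (le_max_right |v| |1-v|)) hmax
    linarith
  · rintro ⟨⟨hh, h1⟩, hNv⟩
    have hv0 : 0 < v := by linarith
    refine ⟨⟨hv0.le, h1⟩, ?_⟩
    rw [tauE, if_neg hv0.ne', hNv, div_self hv0.ne', ENNReal.ofReal_one]

lemma h_ge_one (hC2 : CondC2 N) (w : ℝ) : 1 ≤ N 1 w := by
  have h := hC2 1 w
  calc (1:ℝ) = |1| := by norm_num
  _ ≤ max |1| |w| := le_max_left _ _
  _ ≤ N 1 w := h

lemma mem_of_h_eq_one (hN : IsNorm2 N) {w : ℝ} (hw : 0 ≤ w) (h1 : N 1 w = 1) :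
    1/(1+w) ∈ Omega0E N := by
  have hw1 : 0 < 1 + w := by linarith
  have hv0 : 0 < 1/(1+w) := by positivity
  have hv1 : 1/(1+w) ≤ 1 := by rw [div_le_one hw1]; linarith
  have hwv : (1 - 1/(1+w))/(1/(1+w)) = w := by field_simp; ring
  refine ⟨⟨hv0.le, hv1⟩, ?_⟩
  rw [tau_eq hN hv0, hwv, h1, ENNReal.ofReal_one]

lemma h_conv (hN : IsNorm2 N) {t : ℝ} (ht0 : 0 ≤ t) (ht1 : t ≤ 1) (w₁ w₂ : ℝ) :
    N 1 (t*w₁ + (1-t)*w₂) ≤ t * N 1 w₁ + (1-t) * N 1 w₂ := by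
  have h := conv_ineq hN ht0 (by linarith : (0:ℝ) ≤ 1 - t) 1 w₁ 1 w₂
  rw [show t*1 + (1-t)*1 = 1 from by ring] at h
  exact h

lemma w_lt {x y : ℝ} (hx : 0 < x) (hxy : x < y) : (1-y)/y < (1-x)/x := by
  have hy : 0 < y := hx.trans hxy
  rw [div_lt_div_iff₀ hy hx]
  nlinarith

lemma w_le {x y : ℝ} (hx : 0 < x) (hxy : x ≤ y) : (1-y)/y ≤ (1-x)/x := by
  have hy : 0 < y := lt_of_lt_of_le hx hxy
  rw [div_le_div_iff₀ hy hx]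
  nlinarith

lemma exists_mem_gt_half (hN : IsNorm2 N) (hC1 : CondC1 N) (hC2 : CondC2 N)
    (hC3 : CondC3 N) : ∃ v, v ∈ Omega0E N ∧ 1/2 < v := by
  obtain ⟨x₀, y₀, hx, hy, hne, hmax⟩ := hC3
  wlog hlt : y₀ < x₀ generalizing x₀ y₀
  · exact this y₀ x₀ hy hx hne.symm (by rw [hC1 y₀ x₀, hmax, max_comm])
      (lt_of_le_of_ne (not_lt.1 hlt) hne)
  have hx0 : 0 < x₀ := lt_of_le_of_lt hy hlt
  have hs : 0 < x₀ + y₀ := by linarith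
  refine ⟨x₀/(x₀+y₀), ?_, ?_⟩
  · apply (mem_omega_iff hN hC2).2
    refine ⟨⟨?_, ?_⟩, ?_⟩
    · rw [le_div_iff₀ hs]; linarith
    · rw [div_le_one hs]; linarith
    · have h1 : 1 - x₀/(x₀+y₀) = y₀/(x₀+y₀) := by field_simp; ring
      have h2 := homog_nonneg hN (le_of_lt (by positivity : (0:ℝ) < 1/(x₀+y₀))) x₀ y₀
      rw [show (1/(x₀+y₀))*x₀ = x₀/(x₀+y₀) from by ring,
        show (1/(x₀+y₀))*y₀ = y₀/(x₀+y₀) from by ring] at h2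
      rw [h1, h2, hmax, max_eq_left hlt.le]
      ring
  · rw [lt_div_iff₀ hs]; linarith

end Aux

/-- structure of `τ` and `Ω₀` under Conditions (C1)–(C3):
`Ω₀` is a nonempty closed subinterval `[v′, v″]` of `[1/2, 1]` with `v″ > 1/2`;
`τ(v) > 1` for every `v < 1/2` (in `[0,1)`); and `τ` is strictly decreasing on
`[0, v′]` and strictly increasing on `[v″, 1]`. -/
theorem stmt10 (N : ℝ → ℝ → ℝ) (hN : IsNorm2 N) (hC1 : CondC1 N) (hC2 : CondC2 N)
    (hC3 : CondC3 N) :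
    (Omega0E N).Nonempty ∧
    Omega0E N = Set.Icc (sInf (Omega0E N)) (sSup (Omega0E N)) ∧
    Omega0E N ⊆ Set.Icc (1/2 : ℝ) 1 ∧
    1/2 < sSup (Omega0E N) ∧
    (∀ v : ℝ, 0 ≤ v → v < 1/2 → 1 < tauE N v) ∧
    StrictAntiOn (tauE N) (Set.Icc 0 (sInf (Omega0E N))) ∧
    StrictMonoOn (tauE N) (Set.Icc (sSup (Omega0E N)) 1) := by
  obtain ⟨v₁, hv₁S, hv₁⟩ := exists_mem_gt_half hN hC1 hC2 hC3
  have hne : (Omega0E N).Nonempty := ⟨v₁, hv₁S⟩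
  have hsub : Omega0E N ⊆ Set.Icc (1/2 : ℝ) 1 :=
    fun v hv => ((mem_omega_iff hN hC2).1 hv).1
  have hbb : BddBelow (Omega0E N) := ⟨1/2, fun x hx => (hsub hx).1⟩
  have hba : BddAbove (Omega0E N) := ⟨1, fun x hx => (hsub hx).2⟩
  have hclosed : IsClosed (Omega0E N) := by
    have heq : Omega0E N = Set.Icc (1/2:ℝ) 1 ∩ {v | N v (1 - v) = v} := by
      ext v
      rw [Set.mem_inter_iff, mem_omega_iff hN hC2, Set.mem_setOf_eq]
    rw [heq]
    exact isClosed_Icc.inter (isClosed_eq (g_cont hN) continuous_id)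
  set v' := sInf (Omega0E N) with hv'def
  set v'' := sSup (Omega0E N) with hv''def
  have hv'S : v' ∈ Omega0E N := hclosed.csInf_mem hne hbb
  have hv''S : v'' ∈ Omega0E N := hclosed.csSup_mem hne hba
  have hv'half : (1/2:ℝ) ≤ v' := (hsub hv'S).1
  have hv'1 : v' ≤ 1 := (hsub hv'S).2
  have hv''half : (1/2:ℝ) ≤ v'' := (hsub hv''S).1
  have hv''1 : v'' ≤ 1 := (hsub hv''S).2
  have hv'0 : (0:ℝ) < v' := by linarith
  have hv''0 : (0:ℝ) < v'' := by linarith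
  have hv'le : v' ≤ v'' := csInf_le_csSup hne hbb hba
  have hhalf : (1/2:ℝ) < v'' := lt_of_lt_of_le hv₁ (le_csSup hba hv₁S)
  have hNv' : N v' (1 - v') = v' := ((mem_omega_iff hN hC2).1 hv'S).2
  have hNv'' : N v'' (1 - v'') = v'' := ((mem_omega_iff hN hC2).1 hv''S).2
  -- Ω₀ is the interval [v', v'']
  have hIcc : Omega0E N = Set.Icc v' v'' := by
    ext v
    constructor
    · intro hv
      exact ⟨csInf_le hbb hv, le_csSup hba hv⟩
    · rintro ⟨h1, h2⟩
      apply (mem_omega_iff hN hC2).2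
      have hIv : v ∈ Set.Icc (1/2:ℝ) 1 := ⟨le_trans hv'half h1, le_trans h2 hv''1⟩
      refine ⟨hIv, ?_⟩
      have hge : v ≤ N v (1 - v) :=
        le_trans (le_trans (le_abs_self v) (le_max_left _ _)) (hC2 v (1-v))
      rcases le_or_gt v'' v' with hvv | hvv
      · have hveq : v = v' := le_antisymm (h2.trans hvv) h1
        rw [hveq]; exact hNv'
      · set t := (v'' - v)/(v'' - v') with htdef
        have hden : (0:ℝ) < v'' - v' := by linarith
        have ht0 : 0 ≤ t := div_nonneg (by linarith) hden.le
        have ht1 : t ≤ 1 := (div_le_one hden).2 (by linarith)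
        have hmul : t * (v'' - v') = v'' - v := div_mul_cancel₀ _ hden.ne'
        have hrep1 : v = t*v' + (1-t)*v'' := by linarith [hmul]
        have hrep2 : 1 - v = t*(1-v') + (1-t)*(1-v'') := by linarith [hmul]
        have hle := conv_ineq hN ht0 (by linarith : (0:ℝ) ≤ 1 - t) v' (1-v') v'' (1-v'')
        rw [← hrep1, ← hrep2, hNv', hNv''] at hle
        have : t*v' + (1-t)*v'' = v := hrep1.symm
        linarith
  -- τ > 1 below 1/2
  have hgt_half : ∀ v : ℝ, 0 ≤ v → v < 1/2 → 1 < tauE N v := by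
    intro v hv0 hvh
    rcases eq_or_lt_of_le hv0 with h0 | h0
    · rw [tauE, if_pos h0.symm]
      exact ENNReal.one_lt_top
    · rw [tauE, if_neg h0.ne', ENNReal.one_lt_ofReal, one_lt_div h0]
      have := le_trans (le_trans (le_abs_self (1-v)) (le_max_right |v| |1-v|)) (hC2 v (1-v))
      linarith
  -- h-layer
  set β := (1-v')/v' with hβdef
  set α := (1-v'')/v'' with hαdef
  have hβ0 : 0 ≤ β := div_nonneg (by linarith) hv'0.le
  have hα0 : 0 ≤ α := div_nonneg (by linarith) hv''0.le
  have hhβ : N 1 β = 1 := by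
    have h := hNv'
    rw [scale hN hv'0] at h
    have := mul_left_cancel₀ hv'0.ne' (by rw [h, mul_one] : v' * N 1 β = v' * 1)
    exact this
  have hhα : N 1 α = 1 := by
    have h := hNv''
    rw [scale hN hv''0] at h
    exact mul_left_cancel₀ hv''0.ne' (by rw [h, mul_one] : v'' * N 1 α = v'' * 1)
  have hgtβ : ∀ w : ℝ, β < w → 1 < N 1 w := by
    intro w hw
    rcases (h_ge_one hC2 w).lt_or_eq with h | h
    · exact h
    · exfalso
      have hw0 : 0 ≤ w := hβ0.trans hw.le
      have hmem := mem_of_h_eq_one hN hw0 h.symm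
      have hle : v' ≤ 1/(1+w) := csInf_le hbb hmem
      have hw1 : (0:ℝ) < 1 + w := by linarith
      rw [le_div_iff₀ hw1] at hle
      rw [hβdef, div_lt_iff₀ hv'0] at hw
      nlinarith [hle, hw]
  have hltα : ∀ w : ℝ, 0 ≤ w → w < α → 1 < N 1 w := by
    intro w hw0 hw
    rcases (h_ge_one hC2 w).lt_or_eq with h | h
    · exact h
    · exfalso
      have hmem := mem_of_h_eq_one hN hw0 h.symm
      have hle : 1/(1+w) ≤ v'' := le_csSup hba hmem
      have hw1 : (0:ℝ) < 1 + w := by linarith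
      rw [div_le_iff₀ hw1] at hle
      rw [hαdef, lt_div_iff₀ hv''0] at hw
      nlinarith [hle, hw]
  have h_mono : ∀ w₁ w₂ : ℝ, β ≤ w₁ → w₁ < w₂ → N 1 w₁ < N 1 w₂ := by
    intro w₁ w₂ hw₁ hlt
    have hg2 : 1 < N 1 w₂ := hgtβ w₂ (lt_of_le_of_lt hw₁ hlt)
    set t := (w₂ - w₁)/(w₂ - β) with htdef
    have hden : (0:ℝ) < w₂ - β := by linarith
    have ht0 : 0 < t := div_pos (by linarith) hden
    have ht1 : t ≤ 1 := (div_le_one hden).2 (by linarith)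
    have hmul : t * (w₂ - β) = w₂ - w₁ := div_mul_cancel₀ _ hden.ne'
    have hrep : w₁ = t*β + (1-t)*w₂ := by linarith [hmul]
    have hle := h_conv hN ht0.le ht1 β w₂
    rw [← hrep, hhβ, mul_one] at hle
    linarith [mul_pos ht0 (sub_pos.2 hg2)]
  have h_anti : ∀ w₁ w₂ : ℝ, 0 ≤ w₁ → w₁ < w₂ → w₂ ≤ α → N 1 w₂ < N 1 w₁ := by
    intro w₁ w₂ hw₁0 hlt hw₂α
    have hg1 : 1 < N 1 w₁ := hltα w₁ hw₁0 (lt_of_lt_of_le hlt hw₂α)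
    set t := (α - w₂)/(α - w₁) with htdef
    have hden : (0:ℝ) < α - w₁ := by linarith
    have ht0 : 0 ≤ t := div_nonneg (by linarith) hden.le
    have ht1 : t < 1 := (div_lt_one hden).2 (by linarith)
    have hmul : t * (α - w₁) = α - w₂ := div_mul_cancel₀ _ hden.ne'
    have hrep : w₂ = t*w₁ + (1-t)*α := by linarith [hmul]
    have hle := h_conv hN ht0 ht1.le w₁ α
    rw [← hrep, hhα, mul_one] at hle
    linarith [mul_pos (sub_pos.2 ht1) (sub_pos.2 hg1)]
  -- strict antitonicity on [0, v']
  have hanti : StrictAntiOn (tauE N) (Set.Icc 0 v') := by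
    intro a ha b hb hab
    have hb0 : (0:ℝ) < b := lt_of_le_of_lt ha.1 hab
    rcases eq_or_lt_of_le ha.1 with h0 | h0
    · simp only [tauE, if_neg hb0.ne', if_pos h0.symm]
      exact ENNReal.ofReal_lt_top
    · have hkey : N 1 ((1-b)/b) < N 1 ((1-a)/a) :=
        h_mono _ _ (w_le hb0 hb.2) (w_lt h0 hab)
      rw [tau_eq hN h0, tau_eq hN hb0]
      exact (ENNReal.ofReal_lt_ofReal_iff
        (lt_of_lt_of_le zero_lt_one (h_ge_one hC2 _))).2 hkey
  -- strict monotonicity on [v'', 1]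
  have hmono : StrictMonoOn (tauE N) (Set.Icc v'' 1) := by
    intro a ha b hb hab
    have ha0 : (0:ℝ) < a := lt_of_lt_of_le hv''0 ha.1
    have hb0 : (0:ℝ) < b := ha0.trans hab
    have hwb0 : 0 ≤ (1-b)/b := div_nonneg (by linarith [hb.2]) hb0.le
    have hkey : N 1 ((1-a)/a) < N 1 ((1-b)/b) :=
      h_anti _ _ hwb0 (w_lt ha0 hab) (w_le hv''0 ha.1)
    rw [tau_eq hN ha0, tau_eq hN hb0]
    exact (ENNReal.ofReal_lt_ofReal_iff
      (lt_of_lt_of_le zero_lt_one (h_ge_one hC2 _))).2 hkey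
  exact ⟨hne, hIcc, hsub, hhalf, hgt_half, hanti, hmono⟩
end
end

section
/- Suppose β > 0 and φ is a slowly varying function at infinity such that s ↦ s^{−β}φ(s) defines a continuous strictly decreasing function from [s₀, ∞) onto (0, 1] for some s₀. Then there exists a slowly varying function u defined on [1, ∞) such that s^{−β}φ(s) = t^{−β} whenever s = t·u(t)^{1/β}. Furthermore, for any c in the extended range [0, +∞], u(t) → c as t → ∞ if and only if φ(s) → c as s → ∞. -/
open Filter Set

noncomputable section

/-- A positive function defined near `+∞` is slowly varying at infinity if
`L(at)/L(t) → 1` as `t → ∞` for every `a > 0`. -/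
def SlowlyVarying (L : ℝ → ℝ) : Prop :=
  (∀ᶠ t in atTop, 0 < L t) ∧
    ∀ a : ℝ, 0 < a → Tendsto (fun t => L (a * t) / L t) atTop (nhds 1)

/-- Lemma 1 of the paper: if `β > 0` and `φ` is slowly
varying with `s ↦ s^{−β} φ(s)` a continuous strictly decreasing map from
`[s₀, ∞)` onto `(0, 1]`, then there is a slowly varying `u` on `[1, ∞)` such
that `s^{−β} φ(s) = t^{−β}` whenever `s = t u(t)^{1/β}`; moreover, for any `c`
in the extended range `[0, +∞]`, `u(t) → c` iff `φ(s) → c`. -/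
theorem stmt11 (β : ℝ) (hβ : 0 < β) (s₀ : ℝ) (φ : ℝ → ℝ) (hφ : SlowlyVarying φ)
    (hcont : ContinuousOn (fun s : ℝ => s ^ (-β) * φ s) (Set.Ici s₀))
    (hanti : StrictAntiOn (fun s : ℝ => s ^ (-β) * φ s) (Set.Ici s₀))
    (honto : (fun s : ℝ => s ^ (-β) * φ s) '' Set.Ici s₀ = Set.Ioc (0:ℝ) 1) :
    ∃ u : ℝ → ℝ,
      (∀ t : ℝ, 1 ≤ t → 0 < u t) ∧ SlowlyVarying u ∧
      (∀ t : ℝ, 1 ≤ t → ∀ s : ℝ, s = t * u t ^ (1 / β) →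
        s ^ (-β) * φ s = t ^ (-β)) ∧
      (∀ c : ENNReal,
        Tendsto (fun t => ENNReal.ofReal (u t)) atTop (nhds c) ↔
          Tendsto (fun s => ENNReal.ofReal (φ s)) atTop (nhds c)) := by
  classical
  set g : ℝ → ℝ := fun s => s ^ (-β) * φ s with hg
  have hβne : (-β) ≠ 0 := neg_ne_zero.mpr hβ.ne'
  -- s₀ is positive
  have hs₀pos : 0 < s₀ := by
    by_contra h
    push_neg at h
    have h0 : (0:ℝ) ∈ Ici s₀ := h
    have hmem : g 0 ∈ Ioc (0:ℝ) 1 := honto ▸ mem_image_of_mem g h0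
    have : g 0 = 0 := by simp [hg, Real.zero_rpow hβne]
    rw [this] at hmem
    exact lt_irrefl 0 hmem.1
  -- values of g on Ici s₀
  have hgpos : ∀ s, s₀ ≤ s → 0 < g s ∧ g s ≤ 1 := by
    intro s hs
    have : g s ∈ Ioc (0:ℝ) 1 := honto ▸ mem_image_of_mem g hs
    exact ⟨this.1, this.2⟩
  -- g s₀ = 1
  have hgs₀ : g s₀ = 1 := by
    have h1 : (1:ℝ) ∈ Ioc (0:ℝ) 1 := ⟨one_pos, le_refl 1⟩
    rw [← honto] at h1
    obtain ⟨s, hs, hgs⟩ := h1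
    rcases eq_or_lt_of_le (mem_Ici.mp hs : s₀ ≤ s) with h | h
    · rw [← h] at hgs; exact hgs
    · have h2 : g s < g s₀ := hanti self_mem_Ici hs h
      have h3 := (hgpos s₀ le_rfl).2
      have : g s = 1 := hgs
      linarith
  -- φ positive on Ici s₀
  have hφpos : ∀ s, s₀ ≤ s → 0 < φ s := by
    intro s hs
    have h1 := (hgpos s hs).1
    have h2 : 0 < s ^ (-β) := Real.rpow_pos_of_pos (lt_of_lt_of_le hs₀pos hs) _
    by_contra h
    push_neg at h
    have : g s ≤ 0 := mul_nonpos_of_nonneg_of_nonpos h2.le h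
    linarith
  -- the inverse function σ via surjectivity
  have hmem : ∀ t : ℝ, 1 ≤ t → ∃ s, s ∈ Ici s₀ ∧ g s = t ^ (-β) := by
    intro t ht
    have h1 : t ^ (-β) ∈ Ioc (0:ℝ) 1 :=
      ⟨Real.rpow_pos_of_pos (lt_of_lt_of_le one_pos ht) _,
        Real.rpow_le_one_of_one_le_of_nonpos ht (neg_nonpos.mpr hβ.le)⟩
    rw [← honto] at h1
    obtain ⟨s, hs, hgs⟩ := h1
    exact ⟨s, hs, hgs⟩
  set σ : ℝ → ℝ := fun t => if h : 1 ≤ t then (hmem t h).choose else s₀ with hσdef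
  have hσ_mem : ∀ t, 1 ≤ t → σ t ∈ Ici s₀ := by
    intro t ht; rw [hσdef]; simp only [dif_pos ht]; exact (hmem t ht).choose_spec.1
  have hσ_eq : ∀ t, 1 ≤ t → g (σ t) = t ^ (-β) := by
    intro t ht; rw [hσdef]; simp only [dif_pos ht]; exact (hmem t ht).choose_spec.2
  have hσ_pos : ∀ t, 1 ≤ t → 0 < σ t := fun t ht => lt_of_lt_of_le hs₀pos (hσ_mem t ht)
  -- the function f, inverse of σ
  set f : ℝ → ℝ := fun s => (g s) ^ (-(1/β)) with hfdef
  have hfσ : ∀ t, 1 ≤ t → f (σ t) = t := by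
    intro t ht
    have ht0 : 0 < t := lt_of_lt_of_le one_pos ht
    rw [hfdef]
    simp only
    rw [hσ_eq t ht, ← Real.rpow_mul ht0.le,
      show (-β) * (-(1/β)) = 1 by field_simp, Real.rpow_one]
  have hfmono : StrictMonoOn f (Ici s₀) := by
    intro x hx y hy hxy
    have hgy := (hgpos y hy).1
    have hgx : g y < g x := hanti hx hy hxy
    exact Real.rpow_lt_rpow_of_neg hgy hgx (neg_lt_zero.mpr (by positivity))
  have hfs₀ : f s₀ = 1 := by rw [hfdef]; simp only; rw [hgs₀, Real.one_rpow]
  have hfs1 : ∀ s, s₀ ≤ s → 1 ≤ f s := by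
    intro s hs
    calc 1 = f s₀ := hfs₀.symm
    _ ≤ f s := (hfmono.le_iff_le self_mem_Ici hs).mpr hs
  have hσf : ∀ s, s₀ ≤ s → σ (f s) = s := by
    intro s hs
    have h1 : f (σ (f s)) = f s := hfσ _ (hfs1 s hs)
    exact hfmono.injOn (hσ_mem _ (hfs1 s hs)) hs h1
  -- σ tends to infinity
  have hσtop : Tendsto σ atTop atTop := by
    rw [tendsto_atTop]
    intro M
    have hs₁ : max M s₀ ∈ Ici s₀ := mem_Ici.mpr (le_max_right _ _)
    filter_upwards [eventually_ge_atTop (max 1 (f (max M s₀)))] with t ht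
    have ht1 : 1 ≤ t := le_trans (le_max_left _ _) ht
    have h2 : f (max M s₀) ≤ f (σ t) := by
      rw [hfσ t ht1]; exact le_trans (le_max_right _ _) ht
    have h3 : max M s₀ ≤ σ t := (hfmono.le_iff_le hs₁ (hσ_mem t ht1)).mp h2
    exact le_trans (le_max_left _ _) h3
  -- f tends to infinity
  have hftop : Tendsto f atTop atTop := by
    rw [tendsto_atTop]
    intro b
    have ht1 : (1:ℝ) ≤ max 1 b := le_max_left _ _
    have hs₂ : σ (max 1 b) ∈ Ici s₀ := hσ_mem _ ht1
    filter_upwards [eventually_ge_atTop (σ (max 1 b))] with s hs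
    have hsmem : s ∈ Ici s₀ := le_trans hs₂ hs
    calc b ≤ max 1 b := le_max_right _ _
    _ = f (σ (max 1 b)) := (hfσ _ ht1).symm
    _ ≤ f s := (hfmono.le_iff_le hs₂ hsmem).mpr hs
  -- the function u
  set u : ℝ → ℝ := fun t => (σ t / t) ^ β with hudef
  have hupos : ∀ t, 1 ≤ t → 0 < u t := by
    intro t ht
    have ht0 : 0 < t := lt_of_lt_of_le one_pos ht
    exact Real.rpow_pos_of_pos (div_pos (hσ_pos t ht) ht0) _
  have huφ : ∀ t, 1 ≤ t → u t = φ (σ t) := by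
    intro t ht
    have ht0 : 0 < t := lt_of_lt_of_le one_pos ht
    have hσp := hσ_pos t ht
    have key : (σ t) ^ (-β) * φ (σ t) = t ^ (-β) := hσ_eq t ht
    have h1 : φ (σ t) = (σ t) ^ β * t ^ (-β) := by
      have h2 : (σ t) ^ β * ((σ t) ^ (-β) * φ (σ t)) = (σ t) ^ β * t ^ (-β) := by rw [key]
      rwa [← mul_assoc, ← Real.rpow_add hσp, add_neg_cancel, Real.rpow_zero, one_mul] at h2
    rw [hudef]
    simp only
    rw [h1, Real.div_rpow hσp.le ht0.le, Real.rpow_neg ht0.le, div_eq_mul_inv]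
  -- the functional equation
  have hfun : ∀ t, 1 ≤ t → ∀ s, s = t * u t ^ (1/β) → g s = t ^ (-β) := by
    intro t ht s hs
    have ht0 : 0 < t := lt_of_lt_of_le one_pos ht
    have hσp := hσ_pos t ht
    have h1 : u t ^ (1/β) = σ t / t := by
      rw [hudef]
      simp only
      rw [← Real.rpow_mul (div_pos hσp ht0).le,
        show β * (1/β) = 1 by field_simp, Real.rpow_one]
    have hs' : s = σ t := by rw [hs, h1]; field_simp
    rw [hs']; exact hσ_eq t ht
  -- ratio limit for f
  have hratio : ∀ r : ℝ, 0 < r → Tendsto (fun s => f (r * s) / f s) atTop (nhds r) := by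
    intro r hr
    have h1 : Tendsto (fun s => φ (r * s) / φ s) atTop (nhds 1) := hφ.2 r hr
    have hc : ContinuousAt (fun x : ℝ => x ^ (-(1/β))) 1 :=
      Real.continuousAt_rpow_const 1 _ (Or.inl one_ne_zero)
    have h2 : Tendsto (fun s => (φ (r * s) / φ s) ^ (-(1/β))) atTop (nhds 1) := by
      have := hc.tendsto.comp h1
      simpa [Real.one_rpow, Function.comp_def] using this
    have h3 : Tendsto (fun s => r * (φ (r * s) / φ s) ^ (-(1/β))) atTop (nhds r) := by
      simpa using h2.const_mul r
    refine h3.congr' ?_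
    have hrs : Tendsto (fun s : ℝ => r * s) atTop atTop :=
      Tendsto.const_mul_atTop hr tendsto_id
    have hfform : ∀ x : ℝ, 0 < x → 0 < φ x → f x = x * φ x ^ (-(1/β)) := by
      intro x hx hφx
      rw [hfdef, hg]
      simp only
      rw [Real.mul_rpow (Real.rpow_pos_of_pos hx _).le hφx.le,
        ← Real.rpow_mul hx.le, show (-β) * (-(1/β)) = 1 by field_simp, Real.rpow_one]
    filter_upwards [hφ.1, hrs.eventually hφ.1, eventually_gt_atTop 0] with s hφs hφrs hs0
    have hrs0 : 0 < r * s := mul_pos hr hs0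
    rw [hfform (r * s) hrs0 hφrs, hfform s hs0 hφs,
      Real.div_rpow hφrs.le hφs.le]
    have hφse : φ s ^ (-(1/β)) ≠ 0 := (Real.rpow_pos_of_pos hφs _).ne'
    field_simp
  have hratioσ : ∀ r : ℝ, 0 < r →
      Tendsto (fun t => f (r * σ t) / f (σ t)) atTop (nhds r) := by
    intro r hr
    exact (hratio r hr).comp hσtop
  -- key limit: σ (a t) / σ t → a
  have hA : ∀ a : ℝ, 0 < a → Tendsto (fun t => σ (a * t) / σ t) atTop (nhds a) := by
    intro a ha
    have hat : ∀ᶠ t in atTop, 1 ≤ t ∧ 1 ≤ a * t := by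
      filter_upwards [eventually_ge_atTop (max 1 a⁻¹)] with t ht
      have ht1 : 1 ≤ t := le_trans (le_max_left _ _) ht
      refine ⟨ht1, ?_⟩
      have : a⁻¹ ≤ t := le_trans (le_max_right _ _) ht
      calc (1:ℝ) = a * a⁻¹ := (mul_inv_cancel₀ ha.ne').symm
      _ ≤ a * t := by nlinarith
    rw [tendsto_order]
    constructor
    · intro b hb
      rcases le_or_gt b 0 with hb0 | hb0
      · filter_upwards [hat] with t ⟨ht1, hat1⟩
        have : 0 < σ (a * t) / σ t := div_pos (hσ_pos _ hat1) (hσ_pos _ ht1)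
        linarith
      · have hev1 : ∀ᶠ t in atTop, f (b * σ t) / f (σ t) < a :=
          (hratioσ b hb0).eventually_lt_const hb
        have hev2 : ∀ᶠ t in atTop, s₀ / b ≤ σ t := hσtop.eventually (eventually_ge_atTop _)
        filter_upwards [hat, hev1, hev2] with t ⟨ht1, hat1⟩ h1 h2
        have ht0 : 0 < t := lt_of_lt_of_le one_pos ht1
        have hσp := hσ_pos t ht1
        have hbσ : b * σ t ∈ Ici s₀ := by
          rw [mem_Ici]
          calc s₀ = b * (s₀ / b) := by field_simp
          _ ≤ b * σ t := by nlinarith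
        have hft : f (σ t) = t := hfσ t ht1
        have h3 : f (b * σ t) < a * t := by
          rw [div_lt_iff₀ (by rw [hft]; exact ht0)] at h1
          rw [hft] at h1; linarith
        have h4 : f (b * σ t) < f (σ (a * t)) := by
          rw [hfσ _ hat1]; exact h3
        have h5 : b * σ t < σ (a * t) :=
          (hfmono.lt_iff_lt hbσ (hσ_mem _ hat1)).mp h4
        rw [lt_div_iff₀ hσp]
        linarith
    · intro b hb
      have hb0 : 0 < b := lt_trans ha hb
      have hev1 : ∀ᶠ t in atTop, a < f (b * σ t) / f (σ t) :=
        (hratioσ b hb0).eventually_const_lt hb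
      have hev2 : ∀ᶠ t in atTop, s₀ / b ≤ σ t := hσtop.eventually (eventually_ge_atTop _)
      filter_upwards [hat, hev1, hev2] with t ⟨ht1, hat1⟩ h1 h2
      have ht0 : 0 < t := lt_of_lt_of_le one_pos ht1
      have hσp := hσ_pos t ht1
      have hbσ : b * σ t ∈ Ici s₀ := by
        rw [mem_Ici]
        calc s₀ = b * (s₀ / b) := by field_simp
        _ ≤ b * σ t := by nlinarith
      have hft : f (σ t) = t := hfσ t ht1
      have h3 : a * t < f (b * σ t) := by
        rw [lt_div_iff₀ (by rw [hft]; exact ht0)] at h1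
        rw [hft] at h1; linarith
      have h4 : f (σ (a * t)) < f (b * σ t) := by
        rw [hfσ _ hat1]; exact h3
      have h5 : σ (a * t) < b * σ t :=
        (hfmono.lt_iff_lt (hσ_mem _ hat1) hbσ).mp h4
      rw [div_lt_iff₀ hσp]
      linarith
  -- u is slowly varying
  have husv : SlowlyVarying u := by
    constructor
    · filter_upwards [eventually_ge_atTop 1] with t ht
      exact hupos t ht
    · intro a ha
      have h1 : Tendsto (fun t => σ (a * t) / (a * σ t)) atTop (nhds 1) := by
        have h2 := (hA a ha).div_const a
        rw [div_self ha.ne'] at h2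
        refine h2.congr fun t => ?_
        rw [div_div, mul_comm (σ t) a]
      have hc : ContinuousAt (fun x : ℝ => x ^ β) 1 :=
        Real.continuousAt_rpow_const 1 β (Or.inl one_ne_zero)
      have key : Tendsto (fun t => (σ (a * t) / (a * σ t)) ^ β) atTop (nhds 1) := by
        have := hc.tendsto.comp h1
        simpa [Real.one_rpow, Function.comp_def] using this
      refine key.congr' ?_
      have hat : ∀ᶠ t in atTop, 1 ≤ t ∧ 1 ≤ a * t := by
        filter_upwards [eventually_ge_atTop (max 1 a⁻¹)] with t ht
        have ht1 : 1 ≤ t := le_trans (le_max_left _ _) ht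
        refine ⟨ht1, ?_⟩
        have : a⁻¹ ≤ t := le_trans (le_max_right _ _) ht
        calc (1:ℝ) = a * a⁻¹ := (mul_inv_cancel₀ ha.ne').symm
        _ ≤ a * t := by nlinarith
      filter_upwards [hat] with t ⟨ht1, hat1⟩
      have ht0 : 0 < t := lt_of_lt_of_le one_pos ht1
      have hσp := hσ_pos t ht1
      have hσap := hσ_pos _ hat1
      rw [hudef]
      simp only
      rw [← Real.div_rpow (div_nonneg hσap.le (by positivity)) (div_nonneg hσp.le ht0.le)]
      congr 1
      field_simp
  refine ⟨u, hupos, husv, hfun, ?_⟩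
  intro c
  constructor
  · intro h
    have h2 := h.comp hftop
    refine h2.congr' ?_
    filter_upwards [eventually_ge_atTop s₀] with s hs
    simp only [Function.comp]
    rw [huφ (f s) (hfs1 s hs), hσf s hs]
  · intro h
    have h2 := h.comp hσtop
    refine h2.congr' ?_
    filter_upwards [eventually_ge_atTop 1] with t ht
    simp only [Function.comp]
    rw [huφ t ht]
end
end

section
/- Let λ > 0. For all x, y > 0, lim_{t→∞} t · S(q_A(tx), q_B(ty)) = λ^{−1/λ} ∫₀¹ min{ τ(v)^{−1/λ}/(μ₁ x), τ(1−v)^{−1/λ}/(μ₂ y) } dF_V(v). -/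
open MeasureTheory Filter Set

noncomputable section

/-- τ(v) = ‖(v, 1−v)‖_m / v.  (At `v = 0` this real-valued version takes the
junk value `0` instead of `+∞`; this is irrelevant for all integrals below,
which are taken against an atomless measure.) -/
def tau (N : ℝ → ℝ → ℝ) (v : ℝ) : ℝ := N v (1 - v) / v

/-- The probability measure associated with a distribution function `F_V` on
`[0,1]` that is continuous (no atoms) and strictly increasing (positive mass on
every nonempty open subinterval of `[0,1]`): Assumption 1. -/
def GoodMeasure (μ : Measure ℝ) : Prop :=
  μ ((Set.Icc (0:ℝ) 1)ᶜ) = 0 ∧ (∀ x : ℝ, μ {x} = 0) ∧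
    ∀ a b : ℝ, 0 ≤ a → a < b → b ≤ 1 → 0 < μ (Set.Ioo a b)

/-- The GP(1,λ) survivor function `(1 + λx)₊^{−1/λ}`, interpreted as `e^{−x}`
when `λ = 0`. -/
def gpTail (l x : ℝ) : ℝ :=
  if l = 0 then Real.exp (-x) else (max (1 + l * x) 0) ^ (-1 / l)

/-- Marginal survival function `S_A(x) = ∫₀¹ (1 + λ x τ(v))₊^{−1/λ} dF_V(v)`. -/
def survA (N : ℝ → ℝ → ℝ) (μ : Measure ℝ) (l x : ℝ) : ℝ :=
  ∫ v, gpTail l (x * tau N v) ∂μ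

/-- Marginal survival function `S_B(y) = ∫₀¹ (1 + λ y τ(1−v))₊^{−1/λ} dF_V(v)`. -/
def survB (N : ℝ → ℝ → ℝ) (μ : Measure ℝ) (l y : ℝ) : ℝ :=
  ∫ v, gpTail l (y * tau N (1 - v)) ∂μ

/-- Joint survival function
`S(x,y) = ∫₀¹ (1 + λ max{x τ(v), y τ(1−v)})₊^{−1/λ} dF_V(v)`. -/
def survJ (N : ℝ → ℝ → ℝ) (μ : Measure ℝ) (l x y : ℝ) : ℝ :=
  ∫ v, gpTail l (max (x * tau N v) (y * tau N (1 - v))) ∂μ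

/-- `μ₁ = λ^{−1/λ} ∫₀¹ τ(v)^{−1/λ} dF_V(v)` (for `λ > 0`). -/
def mu1 (N : ℝ → ℝ → ℝ) (μ : Measure ℝ) (l : ℝ) : ℝ :=
  l ^ (-1 / l) * ∫ v, tau N v ^ (-1 / l) ∂μ

/-- `μ₂ = λ^{−1/λ} ∫₀¹ τ(1−v)^{−1/λ} dF_V(v)` (for `λ > 0`). -/
def mu2 (N : ℝ → ℝ → ℝ) (μ : Measure ℝ) (l : ℝ) : ℝ :=
  l ^ (-1 / l) * ∫ v, tau N (1 - v) ^ (-1 / l) ∂μ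

/-- `χ_λ = λ^{−1/λ} ∫₀¹ min{τ(v)^{−1/λ}/μ₁, τ(1−v)^{−1/λ}/μ₂} dF_V(v)`. -/
def chiLam (N : ℝ → ℝ → ℝ) (μ : Measure ℝ) (l : ℝ) : ℝ :=
  l ^ (-1 / l) *
    ∫ v, min (tau N v ^ (-1 / l) / mu1 N μ l)
             (tau N (1 - v) ^ (-1 / l) / mu2 N μ l) ∂μ


namespace Stmt14Aux

lemma measurable_rpow_const' (c : ℝ) : Measurable fun x : ℝ => x ^ c := by
  have h : (fun x : ℝ => x ^ c) = fun x =>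
      if x = 0 then (if c = 0 then 1 else 0)
      else if x < 0 then Real.exp (Real.log x * c) * Real.cos (c * Real.pi)
      else Real.exp (Real.log x * c) := by
    funext x
    rcases lt_trichotomy x 0 with h|h|h
    · rw [if_neg h.ne, if_pos h, Real.rpow_def_of_neg h]
    · subst h
      by_cases hc : c = 0 <;> simp [hc, Real.zero_rpow]
    · rw [if_neg h.ne', if_neg (not_lt.2 h.le), Real.rpow_def_of_pos h]
  rw [h]
  refine Measurable.ite (measurableSet_eq) measurable_const ?_
  exact Measurable.ite (measurableSet_lt measurable_id measurable_const)
    (((Real.measurable_log.mul measurable_const).exp).mul measurable_const)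
    ((Real.measurable_log.mul measurable_const).exp)

variable {l : ℝ}

lemma gpTail_eq (hl : 0 < l) {z : ℝ} (hz : 0 ≤ z) :
    gpTail l z = (1 + l * z) ^ (-1 / l) := by
  rw [gpTail, if_neg hl.ne', max_eq_left (by positivity)]

lemma gpTail_pos (hl : 0 < l) {z : ℝ} (hz : 0 ≤ z) : 0 < gpTail l z := by
  rw [gpTail_eq hl hz]
  exact Real.rpow_pos_of_pos (by positivity) _

lemma neg_inv_nonpos (hl : 0 < l) : (-1 : ℝ) / l ≤ 0 := by
  rw [neg_div]
  simp [div_nonneg, hl.le, zero_le_one]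

lemma gpTail_le_one (hl : 0 < l) {z : ℝ} (hz : 0 ≤ z) : gpTail l z ≤ 1 := by
  rw [gpTail_eq hl hz]
  exact Real.rpow_le_one_of_one_le_of_nonpos (by nlinarith) (neg_inv_nonpos hl)

lemma gpTail_anti (hl : 0 < l) {z₁ z₂ : ℝ} (h0 : 0 ≤ z₁) (h : z₁ ≤ z₂) :
    gpTail l z₂ ≤ gpTail l z₁ := by
  rw [gpTail_eq hl h0, gpTail_eq hl (h0.trans h)]
  exact Real.rpow_le_rpow_of_nonpos (by positivity) (by nlinarith) (neg_inv_nonpos hl)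

lemma gpTail_measurable (hl : l ≠ 0) : Measurable (gpTail l) := by
  unfold gpTail
  simp only [if_neg hl]
  exact (measurable_rpow_const' _).comp
    ((measurable_const.add (measurable_const.mul measurable_id)).max measurable_const)

variable {μ : Measure ℝ} {g : ℝ → ℝ}

lemma scale_rw (hl : 0 < l) {x z : ℝ} (hx : 0 < x) (hz : 1 ≤ z) :
    x ^ (1/l) * gpTail l (x * z) = (x⁻¹ + l * z) ^ (-1/l) := by
  have hz0 : (0:ℝ) ≤ x * z := by nlinarith
  rw [gpTail_eq hl hz0]
  have h1 : x ^ (1/l) = (x⁻¹) ^ (-1/l) := by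
    rw [← Real.rpow_neg_one x, ← Real.rpow_mul hx.le]
    congr 1
    field_simp
  rw [h1, ← Real.mul_rpow (inv_nonneg.2 hx.le) (by nlinarith)]
  congr 1
  field_simp

lemma integrable_of_ae_bound [IsProbabilityMeasure μ] {f : ℝ → ℝ}
    (hf : AEStronglyMeasurable f μ) {C : ℝ} (h : ∀ᵐ v ∂μ, ‖f v‖ ≤ C) :
    Integrable f μ :=
  Integrable.mono' (integrable_const C) hf h

lemma integral_pos_of_ae [IsProbabilityMeasure μ] {f : ℝ → ℝ}
    (hf : AEStronglyMeasurable f μ) (h : ∀ᵐ v ∂μ, 0 < f v ∧ f v ≤ 1) :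
    0 < ∫ v, f v ∂μ := by
  have hint : Integrable f μ := integrable_of_ae_bound hf (by
    filter_upwards [h] with v hv
    rw [Real.norm_eq_abs, abs_of_pos hv.1]; exact hv.2)
  rw [integral_pos_iff_support_of_nonneg_ae
    (by filter_upwards [h] with v hv; exact hv.1.le) hint]
  have h0 : μ (Function.support f)ᶜ = 0 := by
    refine measure_mono_null ?_ (ae_iff.mp h)
    intro v hv
    simp only [mem_compl_iff, Function.mem_support, not_not] at hv
    simp [hv]
  by_contra hμs
  push_neg at hμs
  have hs0 : μ (Function.support f) = 0 := le_antisymm hμs zero_le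
  have h2 : μ (Function.support f ∪ (Function.support f)ᶜ) ≤ 0 := by
    refine le_trans (measure_union_le _ _) ?_
    rw [hs0, h0, add_zero]
  rw [union_compl_self, measure_univ] at h2
  simp at h2

lemma surv_tendsto [IsProbabilityMeasure μ] (hl : 0 < l) (hg : Measurable g)
    (hg1 : ∀ᵐ v ∂μ, 1 ≤ g v) :
    Tendsto (fun x : ℝ => x ^ (1/l) * ∫ v, gpTail l (x * g v) ∂μ) atTop
      (nhds (l ^ (-1/l) * ∫ v, g v ^ (-1/l) ∂μ)) := by
  have hmeas : ∀ x : ℝ, AEStronglyMeasurable (fun v => x ^ (1/l) * gpTail l (x * g v)) μ :=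
    fun x => (measurable_const.mul
      ((gpTail_measurable hl.ne').comp (measurable_const.mul hg))).aestronglyMeasurable
  have key : Tendsto (fun x : ℝ => ∫ v, x ^ (1/l) * gpTail l (x * g v) ∂μ) atTop
      (nhds (∫ v, l ^ (-1/l) * g v ^ (-1/l) ∂μ)) := by
    refine tendsto_integral_filter_of_dominated_convergence (fun _ => l ^ (-1/l))
      (Eventually.of_forall hmeas) ?_ (integrable_const _) ?_
    · filter_upwards [eventually_ge_atTop (1:ℝ)] with x hx
      filter_upwards [hg1] with v hv
      have hx0 : (0:ℝ) < x := lt_of_lt_of_le one_pos hx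
      rw [scale_rw hl hx0 hv, Real.norm_eq_abs,
        abs_of_nonneg (Real.rpow_nonneg (by positivity) _)]
      refine Real.rpow_le_rpow_of_nonpos hl ?_ (neg_inv_nonpos hl)
      have h1 : 0 < x⁻¹ := inv_pos.2 hx0
      nlinarith
    · filter_upwards [hg1] with v hv
      have hgv : (0:ℝ) < l * g v := by nlinarith
      have hc : ContinuousAt (fun s : ℝ => s ^ (-1/l)) (l * g v) :=
        Real.continuousAt_rpow_const _ _ (Or.inl hgv.ne')
      have h2 : Tendsto (fun x : ℝ => x⁻¹ + l * g v) atTop (nhds (0 + l * g v)) :=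
        tendsto_inv_atTop_zero.add tendsto_const_nhds
      rw [zero_add] at h2
      have h3 := hc.tendsto.comp h2
      rw [show (l * g v) ^ (-1/l) = l ^ (-1/l) * g v ^ (-1/l) from
        Real.mul_rpow hl.le (by linarith)] at h3
      refine h3.congr' ?_
      filter_upwards [eventually_ge_atTop (1:ℝ)] with x hx
      simp only [Function.comp_apply]
      exact (scale_rw hl (lt_of_lt_of_le one_pos hx) hv).symm
  simpa only [MeasureTheory.integral_const_mul] using key

lemma surv_pos [IsProbabilityMeasure μ] (hl : 0 < l) (hg : Measurable g)
    (hg1 : ∀ᵐ v ∂μ, 1 ≤ g v) {x : ℝ} (hx : 0 ≤ x) :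
    0 < ∫ v, gpTail l (x * g v) ∂μ := by
  refine integral_pos_of_ae
    ((gpTail_measurable hl.ne').comp (measurable_const.mul hg)).aestronglyMeasurable ?_
  filter_upwards [hg1] with v hv
  have h0 : 0 ≤ x * g v := by nlinarith
  exact ⟨gpTail_pos hl h0, gpTail_le_one hl h0⟩

lemma surv_anti [IsProbabilityMeasure μ] (hl : 0 < l) (hg : Measurable g)
    (hg1 : ∀ᵐ v ∂μ, 1 ≤ g v) {x₁ x₂ : ℝ} (h0 : 0 ≤ x₁) (h : x₁ ≤ x₂) :
    ∫ v, gpTail l (x₂ * g v) ∂μ ≤ ∫ v, gpTail l (x₁ * g v) ∂μ := by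
  have int : ∀ x : ℝ, 0 ≤ x → Integrable (fun v => gpTail l (x * g v)) μ := by
    intro x hx
    refine integrable_of_ae_bound
      ((gpTail_measurable hl.ne').comp (measurable_const.mul hg)).aestronglyMeasurable
      (C := 1) ?_
    filter_upwards [hg1] with v hv
    have h0' : 0 ≤ x * g v := by nlinarith
    rw [Real.norm_eq_abs, abs_of_pos (gpTail_pos hl h0')]
    exact gpTail_le_one hl h0'
  refine integral_mono_ae (int x₂ (h0.trans h)) (int x₁ h0) ?_
  filter_upwards [hg1] with v hv
  exact gpTail_anti hl (by nlinarith) (by nlinarith)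

lemma q_atTop [IsProbabilityMeasure μ] (hl : 0 < l) (hg : Measurable g)
    (hg1 : ∀ᵐ v ∂μ, 1 ≤ g v) {q : ℝ → ℝ}
    (hq : ∀ t : ℝ, 1 ≤ t → 0 ≤ q t ∧ (∫ v, gpTail l (q t * g v) ∂μ) = 1 / t) :
    Tendsto q atTop atTop := by
  rw [tendsto_atTop]
  intro M
  have hS : 0 < ∫ v, gpTail l (max M 0 * g v) ∂μ := surv_pos hl hg hg1 (le_max_right _ _)
  have hev : ∀ᶠ t : ℝ in atTop, 1 / t < ∫ v, gpTail l (max M 0 * g v) ∂μ := by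
    have h1 : Tendsto (fun t : ℝ => 1 / t) atTop (nhds 0) := by
      simpa [one_div] using tendsto_inv_atTop_zero
    exact h1.eventually (eventually_lt_nhds hS)
  filter_upwards [hev, eventually_ge_atTop (1:ℝ)] with t h1 h2
  by_contra hM
  push_neg at hM
  have hqM : q t ≤ max M 0 := le_trans hM.le (le_max_left _ _)
  have h3 := surv_anti hl hg hg1 (hq t h2).1 hqM
  rw [(hq t h2).2] at h3
  linarith

lemma q_ratio [IsProbabilityMeasure μ] (hl : 0 < l) (hg : Measurable g)
    (hg1 : ∀ᵐ v ∂μ, 1 ≤ g v) {q : ℝ → ℝ}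
    (hq : ∀ t : ℝ, 1 ≤ t → 0 ≤ q t ∧ (∫ v, gpTail l (q t * g v) ∂μ) = 1 / t) :
    Tendsto (fun t => q t ^ (1/l) / t) atTop
      (nhds (l ^ (-1/l) * ∫ v, g v ^ (-1/l) ∂μ)) := by
  have h1 := (surv_tendsto hl hg hg1).comp (q_atTop hl hg hg1 hq)
  refine h1.congr' ?_
  filter_upwards [eventually_ge_atTop (1:ℝ)] with t ht
  simp only [Function.comp_apply]
  rw [(hq t ht).2]
  ring

lemma mug_pos [IsProbabilityMeasure μ] (hl : 0 < l) (hg : Measurable g)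
    (hg1 : ∀ᵐ v ∂μ, 1 ≤ g v) : 0 < ∫ v, g v ^ (-1/l) ∂μ := by
  refine integral_pos_of_ae ((measurable_rpow_const' _).comp hg).aestronglyMeasurable ?_
  filter_upwards [hg1] with v hv
  exact ⟨Real.rpow_pos_of_pos (by linarith) _,
    Real.rpow_le_one_of_one_le_of_nonpos hv (neg_inv_nonpos hl)⟩

end Stmt14Aux

namespace Stmt14Aux

variable {N : ℝ → ℝ → ℝ}

lemma normCurve_continuous (hN : IsNorm2 N) : Continuous fun v : ℝ => N v (1 - v) := by
  obtain ⟨h0, -, hhom, htri⟩ := hN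
  have key : ∀ a b : ℝ, N a (1-a) ≤ N b (1-b) + (|a-b| * N 1 0 + |a-b| * N 0 1) := by
    intro a b
    have h1 : N a (1-a) ≤ N b (1-b) + N (a-b) (b-a) := by
      have h := htri b (1-b) (a-b) (b-a)
      have e1 : b + (a-b) = a := by ring
      have e2 : (1-b) + (b-a) = 1-a := by ring
      rwa [e1, e2] at h
    have h2 : N (a-b) (b-a) ≤ N (a-b) 0 + N 0 (b-a) := by
      have h := htri (a-b) 0 0 (b-a)
      have e1 : (a-b) + 0 = a-b := by ring
      have e2 : (0:ℝ) + (b-a) = b-a := by ring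
      rwa [e1, e2] at h
    have h3 : N (a-b) 0 = |a-b| * N 1 0 := by
      have h := hhom (a-b) 1 0
      simpa using h
    have h4 : N 0 (b-a) = |a-b| * N 0 1 := by
      have h := hhom (b-a) 0 1
      simpa [abs_sub_comm] using h
    linarith
  have K0 : 0 ≤ N 1 0 + N 0 1 := by
    have := h0 1 0; have := h0 0 1; linarith
  refine (LipschitzWith.of_dist_le_mul (K := ⟨N 1 0 + N 0 1, K0⟩) ?_).continuous
  intro a b
  have hab := key a b
  have hba := key b a
  rw [abs_sub_comm] at hba
  rw [Real.dist_eq, Real.dist_eq, abs_sub_le_iff]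
  change _ ≤ (N 1 0 + N 0 1) * |a - b| ∧ _ ≤ (N 1 0 + N 0 1) * |a - b|
  constructor <;> nlinarith [abs_nonneg (a-b)]

lemma tau_measurable (hN : IsNorm2 N) : Measurable (tau N) := by
  have : Measurable fun v : ℝ => N v (1 - v) / v :=
    (normCurve_continuous hN).measurable.div measurable_id
  exact this

lemma one_le_tau (hC2 : CondC2 N) {v : ℝ} (hv : v ∈ Ioo (0:ℝ) 1) : 1 ≤ tau N v := by
  have h := hC2 v (1 - v)
  have h1 : v ≤ N v (1 - v) := le_trans (le_trans (le_abs_self v) (le_max_left _ _)) h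
  rw [tau, le_div_iff₀ hv.1, one_mul]
  exact h1

lemma ae_Ioo {μ : Measure ℝ} (hμ : GoodMeasure μ) : ∀ᵐ v ∂μ, v ∈ Ioo (0:ℝ) 1 := by
  obtain ⟨hc, ha, -⟩ := hμ
  have h1 : ∀ᵐ v ∂μ, v ∈ Icc (0:ℝ) 1 := by
    rw [ae_iff]; exact hc
  have h2 : ∀ᵐ v ∂μ, v ≠ 0 := by
    rw [ae_iff]; simp only [not_not]
    exact ha 0
  have h3 : ∀ᵐ v ∂μ, v ≠ 1 := by
    rw [ae_iff]; simp only [not_not]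
    exact ha 1
  filter_upwards [h1, h2, h3] with v hv h0 h1'
  exact ⟨lt_of_le_of_ne hv.1 (Ne.symm h0), lt_of_le_of_ne hv.2 h1'⟩

variable {l : ℝ}

lemma rpow_max_neg {a b c : ℝ} (ha : 0 < a) (hb : 0 < b) (hc : c ≤ 0) :
    (max a b) ^ c = min (a ^ c) (b ^ c) := by
  rcases le_total a b with h|h
  · rw [max_eq_right h, min_eq_right (Real.rpow_le_rpow_of_nonpos ha h hc)]
  · rw [max_eq_left h, min_eq_left (Real.rpow_le_rpow_of_nonpos hb h hc)]

lemma rpow_l_neg_inv {p : ℝ} (hl : 0 < l) (hp : 0 < p) : (p ^ l) ^ (-1/l) = p⁻¹ := by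
  rw [← Real.rpow_mul hp.le, show l * (-1/l) = -1 by field_simp, Real.rpow_neg_one]

lemma min_formula (hl : 0 < l) {a b p q : ℝ} (hp : 0 < p) (hq : 0 < q)
    (ha : 1 ≤ a) (hb : 1 ≤ b) :
    (l * max (p^l * a) (q^l * b)) ^ (-1/l)
      = l ^ (-1/l) * min (a ^ (-1/l) / p) (b ^ (-1/l) / q) := by
  have hpl : (0:ℝ) < p ^ l := Real.rpow_pos_of_pos hp _
  have hql : (0:ℝ) < q ^ l := Real.rpow_pos_of_pos hq _
  have hpa : (0:ℝ) < p^l * a := by nlinarith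
  have hqb : (0:ℝ) < q^l * b := by nlinarith
  rw [Real.mul_rpow hl.le (le_trans hpa.le (le_max_left _ _)),
    rpow_max_neg hpa hqb (neg_inv_nonpos hl)]
  congr 1
  rw [Real.mul_rpow hpl.le (by linarith), rpow_l_neg_inv hl hp,
    Real.mul_rpow hql.le (by linarith), rpow_l_neg_inv hl hq]
  congr 1 <;> rw [div_eq_mul_inv] <;> ring

lemma t_formula (hl : 0 < l) {t c d a b : ℝ} (ht : 1 ≤ t) (hc : 0 ≤ c) (hd : 0 ≤ d)
    (ha : 1 ≤ a) (hb : 1 ≤ b) :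
    t * gpTail l (max (c * a) (d * b))
      = (t ^ (-l) + l * max (c / t^l * a) (d / t^l * b)) ^ (-1/l) := by
  have ht0 : (0:ℝ) < t := lt_of_lt_of_le one_pos ht
  have htl : (0:ℝ) < t ^ l := Real.rpow_pos_of_pos ht0 _
  have hca : (0:ℝ) ≤ c * a := by nlinarith
  have hm : (0:ℝ) ≤ max (c * a) (d * b) := le_trans hca (le_max_left _ _)
  rw [gpTail_eq hl hm]
  have h1 : t = (t ^ (-l)) ^ (-1/l) := by
    rw [← Real.rpow_mul ht0.le, show (-l) * (-1/l) = 1 by field_simp, Real.rpow_one]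
  conv_lhs => rw [h1]
  rw [← Real.mul_rpow (by positivity) (by nlinarith)]
  congr 1
  have h2 : c / t^l * a = (c*a) / t^l := by ring
  have h3 : d / t^l * b = (d*b) / t^l := by ring
  rw [h2, h3, max_div_div_right htl.le, Real.rpow_neg ht0.le]
  field_simp

end Stmt14Aux

open Stmt14Aux in
/-- equation (17) of Appendix B: for `λ > 0` and all
`x, y > 0`,
`t·S(q_A(tx), q_B(ty)) → λ^{−1/λ} ∫₀¹ min{τ(v)^{−1/λ}/(μ₁x), τ(1−v)^{−1/λ}/(μ₂y)} dF_V(v)`. -/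
theorem stmt14 (N : ℝ → ℝ → ℝ) (hN : IsNorm2 N) (hC1 : CondC1 N) (hC2 : CondC2 N)
    (hC3 : CondC3 N) (μ : Measure ℝ) [IsProbabilityMeasure μ] (hμ : GoodMeasure μ)
    (l : ℝ) (hl : 0 < l) (qA qB : ℝ → ℝ)
    (hqA : ∀ t : ℝ, 1 ≤ t → 0 ≤ qA t ∧ survA N μ l (qA t) = 1 / t)
    (hqB : ∀ t : ℝ, 1 ≤ t → 0 ≤ qB t ∧ survB N μ l (qB t) = 1 / t) :
    ∀ x y : ℝ, 0 < x → 0 < y →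
      Tendsto (fun t : ℝ => t * survJ N μ l (qA (t * x)) (qB (t * y))) atTop
        (nhds (l ^ (-1 / l) *
          ∫ v, min (tau N v ^ (-1 / l) / (mu1 N μ l * x))
                   (tau N (1 - v) ^ (-1 / l) / (mu2 N μ l * y)) ∂μ)) := by
  intro x y hx hy
  have hτm : Measurable (tau N) := tau_measurable hN
  have hg₂m : Measurable (fun v : ℝ => tau N (1 - v)) :=
    hτm.comp (measurable_const.sub measurable_id)
  have haem := ae_Ioo hμ
  have hg1 : ∀ᵐ v ∂μ, 1 ≤ tau N v := by
    filter_upwards [haem] with v hv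
    exact one_le_tau hC2 hv
  have hg2 : ∀ᵐ v ∂μ, 1 ≤ tau N (1 - v) := by
    filter_upwards [haem] with v hv
    exact one_le_tau hC2 ⟨by linarith [hv.2], by linarith [hv.1]⟩
  have hqA' : ∀ t : ℝ, 1 ≤ t →
      0 ≤ qA t ∧ (∫ v, gpTail l (qA t * tau N v) ∂μ) = 1 / t := by
    intro t ht
    exact ⟨(hqA t ht).1, (hqA t ht).2⟩
  have hqB' : ∀ t : ℝ, 1 ≤ t →
      0 ≤ qB t ∧ (∫ v, gpTail l (qB t * tau N (1 - v)) ∂μ) = 1 / t := by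
    intro t ht
    exact ⟨(hqB t ht).1, (hqB t ht).2⟩
  have hRA : Tendsto (fun t => qA t ^ (1/l) / t) atTop (nhds (mu1 N μ l)) :=
    q_ratio hl hτm hg1 hqA'
  have hRB : Tendsto (fun t => qB t ^ (1/l) / t) atTop (nhds (mu2 N μ l)) :=
    q_ratio hl hg₂m hg2 hqB'
  have hm1 : 0 < mu1 N μ l :=
    mul_pos (Real.rpow_pos_of_pos hl _) (mug_pos hl hτm hg1)
  have hm2 : 0 < mu2 N μ l :=
    mul_pos (Real.rpow_pos_of_pos hl _) (mug_pos hl hg₂m hg2)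
  -- composed ratios
  have hAx : Tendsto (fun t : ℝ => qA (t*x) ^ (1/l) / t) atTop (nhds (mu1 N μ l * x)) := by
    have h1 : Tendsto (fun t : ℝ => t * x) atTop atTop :=
      Tendsto.atTop_mul_const hx tendsto_id
    have h3 := (hRA.comp h1).mul_const x
    refine h3.congr' ?_
    filter_upwards [eventually_gt_atTop (0:ℝ)] with t ht
    simp only [Function.comp_apply]
    field_simp
  have hBy : Tendsto (fun t : ℝ => qB (t*y) ^ (1/l) / t) atTop (nhds (mu2 N μ l * y)) := by
    have h1 : Tendsto (fun t : ℝ => t * y) atTop atTop :=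
      Tendsto.atTop_mul_const hy tendsto_id
    have h3 := (hRB.comp h1).mul_const y
    refine h3.congr' ?_
    filter_upwards [eventually_gt_atTop (0:ℝ)] with t ht
    simp only [Function.comp_apply]
    field_simp
  -- eventual domain facts
  have hev : ∀ᶠ t : ℝ in atTop, 1 ≤ t ∧ 1 ≤ t * x ∧ 1 ≤ t * y := by
    filter_upwards [eventually_ge_atTop (1:ℝ), eventually_ge_atTop (1/x),
      eventually_ge_atTop (1/y)] with t h1 h2 h3
    refine ⟨h1, ?_, ?_⟩
    · rw [div_le_iff₀ hx] at h2; linarith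
    · rw [div_le_iff₀ hy] at h3; linarith
  have hA : Tendsto (fun t : ℝ => qA (t*x) / t ^ l) atTop
      (nhds ((mu1 N μ l * x) ^ l)) := by
    have hc : ContinuousAt (fun s : ℝ => s ^ l) (mu1 N μ l * x) :=
      Real.continuousAt_rpow_const _ _ (Or.inr hl.le)
    refine (hc.tendsto.comp hAx).congr' ?_
    filter_upwards [hev] with t ht
    have ht0 : (0:ℝ) < t := lt_of_lt_of_le one_pos ht.1
    have hq0 : 0 ≤ qA (t*x) := (hqA _ ht.2.1).1
    simp only [Function.comp_apply]
    rw [Real.div_rpow (Real.rpow_nonneg hq0 _) ht0.le, ← Real.rpow_mul hq0,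
      show 1/l * l = 1 by field_simp, Real.rpow_one]
  have hB : Tendsto (fun t : ℝ => qB (t*y) / t ^ l) atTop
      (nhds ((mu2 N μ l * y) ^ l)) := by
    have hc : ContinuousAt (fun s : ℝ => s ^ l) (mu2 N μ l * y) :=
      Real.continuousAt_rpow_const _ _ (Or.inr hl.le)
    refine (hc.tendsto.comp hBy).congr' ?_
    filter_upwards [hev] with t ht
    have ht0 : (0:ℝ) < t := lt_of_lt_of_le one_pos ht.1
    have hq0 : 0 ≤ qB (t*y) := (hqB _ ht.2.2).1
    simp only [Function.comp_apply]
    rw [Real.div_rpow (Real.rpow_nonneg hq0 _) ht0.le, ← Real.rpow_mul hq0,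
      show 1/l * l = 1 by field_simp, Real.rpow_one]
  set A : ℝ := (mu1 N μ l * x) ^ l with hAdef
  set B : ℝ := (mu2 N μ l * y) ^ l with hBdef
  have hApos : 0 < A := Real.rpow_pos_of_pos (mul_pos hm1 hx) _
  have hBpos : 0 < B := Real.rpow_pos_of_pos (mul_pos hm2 hy) _
  have hmeasJ : ∀ t : ℝ, AEStronglyMeasurable
      (fun v => t * gpTail l (max (qA (t*x) * tau N v) (qB (t*y) * tau N (1 - v)))) μ :=
    fun t => (measurable_const.mul ((gpTail_measurable hl.ne').comp
      ((measurable_const.mul hτm).max (measurable_const.mul hg₂m)))).aestronglyMeasurable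
  have key : Tendsto
      (fun t : ℝ => ∫ v, t * gpTail l (max (qA (t*x) * tau N v) (qB (t*y) * tau N (1 - v))) ∂μ)
      atTop (nhds (∫ v, (l * max (A * tau N v) (B * tau N (1 - v))) ^ (-1/l) ∂μ)) := by
    refine tendsto_integral_filter_of_dominated_convergence (fun _ => (l * (A/2)) ^ (-1/l))
      (Eventually.of_forall hmeasJ) ?_ (integrable_const _) ?_
    · -- uniform bound
      filter_upwards [hev, hA.eventually (eventually_gt_nhds (by linarith : A/2 < A))]
        with t ht hA2
      have ht0 : (0:ℝ) < t := lt_of_lt_of_le one_pos ht.1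
      have htl : (0:ℝ) < t ^ l := Real.rpow_pos_of_pos ht0 _
      have hq0A : 0 ≤ qA (t*x) := (hqA _ ht.2.1).1
      have hq0B : 0 ≤ qB (t*y) := (hqB _ ht.2.2).1
      filter_upwards [hg1, hg2] with v hv1 hv2
      rw [t_formula hl ht.1 hq0A hq0B hv1 hv2, Real.norm_eq_abs,
        abs_of_nonneg (Real.rpow_nonneg (by positivity) _)]
      refine Real.rpow_le_rpow_of_nonpos (by positivity) ?_ (neg_inv_nonpos hl)
      have h5 : A/2 ≤ qA (t*x) / t^l * tau N v := by
        have := div_nonneg hq0A htl.le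
        nlinarith
      have h6 : A/2 ≤ max (qA (t*x) / t^l * tau N v) (qB (t*y) / t^l * tau N (1 - v)) :=
        le_trans h5 (le_max_left _ _)
      have h7 : l * (A/2) ≤ l * max (qA (t*x) / t^l * tau N v)
          (qB (t*y) / t^l * tau N (1 - v)) := mul_le_mul_of_nonneg_left h6 hl.le
      have h8 : (0:ℝ) ≤ t ^ (-l) := Real.rpow_nonneg ht0.le _
      linarith
    · -- pointwise limit
      filter_upwards [hg1, hg2] with v hv1 hv2
      have hMpos : 0 < l * max (A * tau N v) (B * tau N (1 - v)) := by
        have h1 : A ≤ A * tau N v := by nlinarith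
        have h2 : 0 < max (A * tau N v) (B * tau N (1 - v)) :=
          lt_of_lt_of_le hApos (le_trans h1 (le_max_left _ _))
        positivity
      have hc : ContinuousAt (fun s : ℝ => s ^ (-1/l))
          (l * max (A * tau N v) (B * tau N (1 - v))) :=
        Real.continuousAt_rpow_const _ _ (Or.inl hMpos.ne')
      have hinner : Tendsto (fun t : ℝ =>
          t ^ (-l) + l * max (qA (t*x) / t^l * tau N v) (qB (t*y) / t^l * tau N (1 - v)))
          atTop (nhds (0 + l * max (A * tau N v) (B * tau N (1 - v)))) :=
        (tendsto_rpow_neg_atTop hl).add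
          (((hA.mul_const _).max (hB.mul_const _)).const_mul l)
      rw [zero_add] at hinner
      refine (hc.tendsto.comp hinner).congr' ?_
      filter_upwards [hev] with t ht
      have hq0A : 0 ≤ qA (t*x) := (hqA _ ht.2.1).1
      have hq0B : 0 ≤ qB (t*y) := (hqB _ ht.2.2).1
      simp only [Function.comp_apply]
      exact (t_formula hl ht.1 hq0A hq0B hv1 hv2).symm
  have hlim_eq : (∫ v, (l * max (A * tau N v) (B * tau N (1 - v))) ^ (-1/l) ∂μ)
      = l ^ (-1 / l) * ∫ v, min (tau N v ^ (-1 / l) / (mu1 N μ l * x))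
          (tau N (1 - v) ^ (-1 / l) / (mu2 N μ l * y)) ∂μ := by
    rw [← MeasureTheory.integral_const_mul]
    refine integral_congr_ae ?_
    filter_upwards [hg1, hg2] with v hv1 hv2
    rw [hAdef, hBdef]
    exact min_formula hl (mul_pos hm1 hx) (mul_pos hm2 hy) hv1 hv2
  rw [hlim_eq] at key
  refine key.congr ?_
  intro t
  rw [survJ, MeasureTheory.integral_const_mul]
end
end

section
/- Let λ > 0 and let f_V be a probability density on [0,1]. Define μ₁ = λ^{−1/λ} ∫₀¹ τ(v)^{−1/λ} f_V(v) dv and μ₂ = λ^{−1/λ} ∫₀¹ τ(1−v)^{−1/λ} f_V(v) dv, and for 0 < w < 1 define h(w; λ, f_V) = (1/2)·λ^{1−1/λ}·w^{λ−1}(1−w)^{λ−1} μ₁^λ μ₂^λ / [ ‖((wμ₁)^λ, ((1−w)μ₂)^λ)‖_m^{1/λ} · {(wμ₁)^λ + ((1−w)μ₂)^λ}² ] × f_V( (μ₁ w)^λ / ((wμ₁)^λ + ((1−w)μ₂)^λ) ). Then ∫₀¹ w·h(w; λ, f_V) dw = 1/2, even if ∫₀¹ v f_V(v) dv ≠ 1/2.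 -/
open MeasureTheory Set

noncomputable section

/-- The spectral density `h(w; λ, f_V)` of Remark 1 of the paper. -/
def specDens (N : ℝ → ℝ → ℝ) (l : ℝ) (fV : ℝ → ℝ) (μ₁ μ₂ w : ℝ) : ℝ :=
  1 / 2 * l ^ (1 - 1 / l) *
      (w ^ (l - 1) * (1 - w) ^ (l - 1) * μ₁ ^ l * μ₂ ^ l) /
      (N ((w * μ₁) ^ l) (((1 - w) * μ₂) ^ l) ^ (1 / l) *
        ((w * μ₁) ^ l + ((1 - w) * μ₂) ^ l) ^ (2 : ℕ)) *
    fV ((μ₁ * w) ^ l / ((w * μ₁) ^ l + ((1 - w) * μ₂) ^ l))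

open Filter in
lemma norm2_line_continuous (N : ℝ → ℝ → ℝ) (hN : IsNorm2 N) :
    Continuous fun v : ℝ => N v (1 - v) := by
  obtain ⟨hpos, hzero, hhom, htri⟩ := hN
  have key : ∀ a b : ℝ, N a (1 - a) ≤ N b (1 - b) + |a - b| * N 1 (-1) := by
    intro a b
    have e := hhom (a - b) 1 (-1)
    rw [mul_one, show (a - b) * (-1) = (1 - a) - (1 - b) by ring] at e
    have h := htri b (1 - b) (a - b) ((1 - a) - (1 - b))
    rw [show b + (a - b) = a by ring, show (1 - b) + ((1 - a) - (1 - b)) = 1 - a by ring,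
      e] at h
    linarith
  have hK : 0 ≤ N 1 (-1) := hpos 1 (-1)
  have : LipschitzWith (Real.toNNReal (N 1 (-1))) fun v : ℝ => N v (1 - v) := by
    apply LipschitzWith.of_dist_le_mul
    intro a b
    rw [Real.dist_eq, Real.dist_eq, Real.coe_toNNReal _ hK]
    rw [abs_sub_le_iff]
    constructor
    · have := key a b; nlinarith [abs_nonneg (a - b)]
    · have := key b a; rw [abs_sub_comm] at this; nlinarith [abs_nonneg (a - b)]
  exact this.continuous

open Filter in
lemma tau_measurable (N : ℝ → ℝ → ℝ) (hN : IsNorm2 N) : Measurable (tau N) :=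
  ((norm2_line_continuous N hN).measurable).div measurable_id

open Filter in
lemma integral_weighted_pos (fV : ℝ → ℝ) (hfV_nonneg : ∀ v, 0 ≤ fV v)
    (hfV_int : IntegrableOn fV (Set.Icc (0:ℝ) 1))
    (hfV_one : ∫ v in Set.Icc (0:ℝ) 1, fV v = 1)
    (m : ℝ → ℝ) (hm : Measurable m) (hm0 : ∀ v ∈ Set.Icc (0:ℝ) 1, 0 ≤ m v)
    (hm1 : ∀ v ∈ Set.Icc (0:ℝ) 1, m v ≤ 1)
    (b : ℝ) (hmpos : ∀ v ∈ Set.Icc (0:ℝ) 1, v ≠ b → 0 < m v) :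
    0 < ∫ v in Set.Icc (0:ℝ) 1, m v * fV v := by
  have hmul_nonneg : 0 ≤ᵐ[volume.restrict (Set.Icc (0:ℝ) 1)] fun v => m v * fV v := by
    rw [Filter.EventuallyLE, ae_restrict_iff' measurableSet_Icc]
    exact Eventually.of_forall fun v hv => mul_nonneg (hm0 v hv) (hfV_nonneg v)
  have hint : IntegrableOn (fun v => m v * fV v) (Set.Icc (0:ℝ) 1) := by
    apply Integrable.mono' hfV_int
      (hm.aestronglyMeasurable.mul hfV_int.aestronglyMeasurable)
    rw [ae_restrict_iff' measurableSet_Icc]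
    refine Eventually.of_forall fun v hv => ?_
    simp only [Pi.mul_apply]
    rw [Real.norm_eq_abs, abs_of_nonneg (mul_nonneg (hm0 v hv) (hfV_nonneg v))]
    calc m v * fV v ≤ 1 * fV v := mul_le_mul_of_nonneg_right (hm1 v hv) (hfV_nonneg v)
      _ = fV v := one_mul _
  have h0 : 0 ≤ ∫ v in Set.Icc (0:ℝ) 1, m v * fV v := integral_nonneg_of_ae hmul_nonneg
  rcases h0.lt_or_eq with h | h
  · exact h
  · exfalso
    have hz : (fun v => m v * fV v) =ᵐ[volume.restrict (Set.Icc (0:ℝ) 1)] 0 :=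
      (integral_eq_zero_iff_of_nonneg_ae hmul_nonneg hint).mp h.symm
    have hb : ∀ᵐ v ∂volume.restrict (Set.Icc (0:ℝ) 1), v ≠ b := by
      refine ae_iff.mpr ?_
      have hsub : {a : ℝ | ¬a ≠ b} ⊆ {b} := by intro x hx; simpa using not_not.mp hx
      refine le_antisymm (le_trans (measure_mono hsub) ?_) zero_le
      refine le_trans (Measure.restrict_le_self _) ?_
      simp
    have hfz : fV =ᵐ[volume.restrict (Set.Icc (0:ℝ) 1)] 0 := by
      filter_upwards [hz, hb, ae_restrict_mem measurableSet_Icc] with v h1 h2 h3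
      have hmv := hmpos v h3 h2
      have : m v * fV v = 0 := h1
      simpa using (mul_eq_zero.mp this).resolve_left hmv.ne'
    rw [integral_congr_ae hfz] at hfV_one; simp at hfV_one

lemma cov (l A B : ℝ) (hl : 0 < l) (hA : 0 < A) (hB : 0 < B) (g : ℝ → ℝ) :
    ∫ v in Set.Ioo (0:ℝ) 1, g v
      = ∫ w in Set.Ioo (0:ℝ) 1,
          (l * (A * B) * (w ^ (l-1) * (1-w) ^ (l-1)) / (A * w ^ l + B * (1-w) ^ l) ^ (2:ℕ)) *
            g (A * w ^ l / (A * w ^ l + B * (1-w) ^ l)) := by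
  set φ : ℝ → ℝ := fun w => A * w ^ l / (A * w ^ l + B * (1-w) ^ l) with hφdef
  set D : ℝ → ℝ :=
    fun w => l * (A * B) * (w ^ (l-1) * (1-w) ^ (l-1)) /
      (A * w ^ l + B * (1-w) ^ l) ^ (2:ℕ) with hDdef
  have hS : ∀ w ∈ Set.Icc (0:ℝ) 1, 0 < A * w ^ l + B * (1-w) ^ l := by
    intro w hw
    obtain ⟨h0, h1⟩ := hw
    rcases h0.eq_or_lt with rfl | hw0
    · simp [Real.zero_rpow hl.ne', Real.one_rpow]
      positivity
    · have h2 : 0 < A * w ^ l := mul_pos hA (Real.rpow_pos_of_pos hw0 l)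
      have h3 : 0 ≤ B * (1-w) ^ l :=
        mul_nonneg hB.le (Real.rpow_nonneg (by linarith) l)
      linarith
  have hDeriv : ∀ w ∈ Set.Ioo (0:ℝ) 1, HasDerivAt φ (D w) w := by
    intro w hw
    obtain ⟨hw0, hw1⟩ := hw
    have h1w : 0 < 1 - w := by linarith
    have hu : HasDerivAt (fun w : ℝ => A * w ^ l) (A * (l * w ^ (l-1))) w :=
      (Real.hasDerivAt_rpow_const (Or.inl hw0.ne')).const_mul A
    have hinner : HasDerivAt (fun w : ℝ => 1 - w) (-1) w :=
      (hasDerivAt_id w).const_sub 1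
    have houter : HasDerivAt (fun y : ℝ => y ^ l) (l * (1-w) ^ (l-1)) (1 - w) :=
      Real.hasDerivAt_rpow_const (Or.inl h1w.ne')
    have hv : HasDerivAt (fun w : ℝ => B * (1-w) ^ l)
        (B * (l * (1-w) ^ (l-1) * -1)) w :=
      (HasDerivAt.comp w houter hinner).const_mul B
    have hSne : A * w ^ l + B * (1-w) ^ l ≠ 0 :=
      (hS w (Set.Ioo_subset_Icc_self ⟨hw0, hw1⟩)).ne'
    have hdiv := hu.div (hu.add hv) hSne
    convert hdiv using 1
    case e'_4 => rfl
    case e'_5 => rfl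
    case e'_8 => rfl
    have ew : w ^ l = w ^ (l-1) * w := by
      have := Real.rpow_add_one hw0.ne' (l-1)
      rw [sub_add_cancel] at this
      exact this
    have e1w : (1-w) ^ l = (1-w) ^ (l-1) * (1-w) := by
      have := Real.rpow_add_one h1w.ne' (l-1)
      rw [sub_add_cancel] at this
      exact this
    simp only [hDdef, Pi.add_apply]
    rw [ew, e1w]
    ring
  have hDpos : ∀ w ∈ Set.Ioo (0:ℝ) 1, 0 < D w := by
    intro w hw
    obtain ⟨hw0, hw1⟩ := hw
    have h1w : 0 < 1 - w := by linarith
    have h2 : 0 < w ^ (l-1) := Real.rpow_pos_of_pos hw0 _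
    have h3 : 0 < (1-w) ^ (l-1) := Real.rpow_pos_of_pos h1w _
    have h4 := hS w (Set.Ioo_subset_Icc_self ⟨hw0, hw1⟩)
    simp only [hDdef]
    exact div_pos (mul_pos (mul_pos hl (mul_pos hA hB)) (mul_pos h2 h3))
      (pow_pos h4 2)
  have hrc : Continuous fun w : ℝ => w ^ l := by
    rw [continuous_iff_continuousAt]
    exact fun x => Real.continuousAt_rpow_const x l (Or.inr hl.le)
  have h1c : Continuous fun w : ℝ => (1-w) ^ l :=
    hrc.comp (continuous_const.sub continuous_id)
  have hcont : ContinuousOn φ (Set.Icc 0 1) := by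
    apply ContinuousOn.div ((continuous_const.mul hrc).continuousOn)
      (((continuous_const.mul hrc).add (continuous_const.mul h1c)).continuousOn)
    exact fun w hw => (hS w hw).ne'
  have hφ0 : φ 0 = 0 := by
    simp [hφdef, Real.zero_rpow hl.ne']
  have hφ1 : φ 1 = 1 := by
    simp [hφdef, Real.zero_rpow hl.ne', Real.one_rpow, div_self hA.ne']
  have himg : φ '' Set.Ioo 0 1 = Set.Ioo 0 1 := by
    apply subset_antisymm
    · rintro v ⟨w, hw, rfl⟩
      obtain ⟨hw0, hw1⟩ := hw
      have h1w : 0 < 1 - w := by linarith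
      have hupos : 0 < A * w ^ l := mul_pos hA (Real.rpow_pos_of_pos hw0 l)
      have hvpos : 0 < B * (1-w) ^ l := mul_pos hB (Real.rpow_pos_of_pos h1w l)
      have hSpos := hS w (Set.Ioo_subset_Icc_self ⟨hw0, hw1⟩)
      constructor
      · exact div_pos hupos hSpos
      · rw [div_lt_one hSpos]; linarith
    · have := intermediate_value_Ioo (by norm_num : (0:ℝ) ≤ 1) hcont
      rwa [hφ0, hφ1] at this
  have hmono : StrictMonoOn φ (Set.Ioo 0 1) := by
    apply strictMonoOn_of_deriv_pos (convex_Ioo 0 1)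
      (fun x hx => ((hDeriv x hx).continuousAt.continuousWithinAt))
    intro x hx
    rw [interior_Ioo] at hx
    rw [(hDeriv x hx).deriv]
    exact hDpos x hx
  have hCoV := integral_image_eq_integral_abs_deriv_smul measurableSet_Ioo
    (fun x hx => (hDeriv x hx).hasDerivWithinAt) hmono.injOn g
  rw [himg] at hCoV
  rw [hCoV]
  apply setIntegral_congr_fun measurableSet_Ioo
  intro w hw
  have h := hDpos w hw
  simp only [hDdef, hφdef] at h ⊢
  rw [smul_eq_mul, abs_of_pos h]

theorem stmt17' (N : ℝ → ℝ → ℝ) (hN : IsNorm2 N) (hC2 : CondC2 N)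
    (l : ℝ) (hl : 0 < l) (fV : ℝ → ℝ)
    (hfV_nonneg : ∀ v, 0 ≤ fV v)
    (hfV_int : IntegrableOn fV (Set.Icc (0:ℝ) 1))
    (hfV_one : ∫ v in Set.Icc (0:ℝ) 1, fV v = 1)
    (μ₁ μ₂ : ℝ)
    (hμ₁ : μ₁ = l ^ (-1 / l) * ∫ v in Set.Icc (0:ℝ) 1, tau N v ^ (-1 / l) * fV v)
    (hμ₂ : μ₂ = l ^ (-1 / l) *
      ∫ v in Set.Icc (0:ℝ) 1, tau N (1 - v) ^ (-1 / l) * fV v) :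
    ∫ w in Set.Ioo (0:ℝ) 1, w * specDens N l fV μ₁ μ₂ w = 1 / 2 := by
  have hLpos : (0:ℝ) < l ^ (-1/l) := Real.rpow_pos_of_pos hl _
  have hexp_ne : (-1/l : ℝ) ≠ 0 := by
    rw [neg_div]; exact neg_ne_zero.mpr (one_div_ne_zero hl.ne')
  have hexp_np : (-1/l : ℝ) ≤ 0 := by
    rw [neg_div]; exact neg_nonpos.mpr (by positivity)
  have tau_ge_one : ∀ u : ℝ, 0 < u → 1 ≤ tau N u := by
    intro u hu
    have h1 : |u| ≤ N u (1 - u) := le_trans (le_max_left _ _) (hC2 u (1 - u))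
    rw [abs_of_pos hu] at h1
    exact (one_le_div hu).mpr h1
  have tau_nonneg : ∀ u : ℝ, 0 ≤ u → 0 ≤ tau N u := by
    intro u hu
    exact div_nonneg (hN.1 u (1 - u)) hu
  have tau_zero : tau N 0 = 0 := by simp [tau]
  have hrpc : Measurable fun x : ℝ => x ^ (-1/l) :=
    measurable_of_continuousOn_compl_singleton (0:ℝ)
      (fun x hx => (Real.continuousAt_rpow_const x _ (Or.inl hx)).continuousWithinAt)
  -- positivity of μ₁
  have hμ₁pos : 0 < μ₁ := by
    rw [hμ₁]
    refine mul_pos hLpos ?_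
    refine integral_weighted_pos fV hfV_nonneg hfV_int hfV_one _
      (hrpc.comp (tau_measurable N hN)) ?_ ?_ 0 ?_
    · intro v hv
      exact Real.rpow_nonneg (tau_nonneg v hv.1) _
    · intro v hv
      rcases hv.1.eq_or_lt with rfl | hv0
      · rw [tau_zero, Real.zero_rpow hexp_ne]; norm_num
      · exact Real.rpow_le_one_of_one_le_of_nonpos (tau_ge_one v hv0) hexp_np
    · intro v hv hv0
      have hv0' : 0 < v := hv.1.lt_of_ne (Ne.symm hv0)
      exact Real.rpow_pos_of_pos (lt_of_lt_of_le one_pos (tau_ge_one v hv0')) _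
  have hμ₂pos : 0 < μ₂ := by
    rw [hμ₂]
    refine mul_pos hLpos ?_
    refine integral_weighted_pos fV hfV_nonneg hfV_int hfV_one _
      (hrpc.comp ((tau_measurable N hN).comp (measurable_const.sub measurable_id)))
      ?_ ?_ 1 ?_
    · intro v hv
      exact Real.rpow_nonneg (tau_nonneg _ (by linarith [hv.2])) _
    · intro v hv
      rcases hv.2.eq_or_lt with rfl | hv1
      · rw [sub_self, tau_zero, Real.zero_rpow hexp_ne]; norm_num
      · exact Real.rpow_le_one_of_one_le_of_nonpos
          (tau_ge_one _ (by linarith)) hexp_np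
    · intro v hv hv1
      have : 0 < 1 - v := by
        rcases hv.2.eq_or_lt with rfl | h; · exact absurd rfl hv1
        · linarith
      exact Real.rpow_pos_of_pos (lt_of_lt_of_le one_pos (tau_ge_one _ this)) _
  have hA : (0:ℝ) < μ₁ ^ l := Real.rpow_pos_of_pos hμ₁pos l
  have hB : (0:ℝ) < μ₂ ^ l := Real.rpow_pos_of_pos hμ₂pos l
  -- pointwise identity
  have hpt : ∀ w ∈ Set.Ioo (0:ℝ) 1,
      w * specDens N l fV μ₁ μ₂ w
        = (l ^ (-1/l) / (2 * μ₁)) *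
          ((l * (μ₁ ^ l * μ₂ ^ l) * (w ^ (l-1) * (1-w) ^ (l-1)) /
              (μ₁ ^ l * w ^ l + μ₂ ^ l * (1-w) ^ l) ^ (2:ℕ)) *
            (tau N (μ₁ ^ l * w ^ l / (μ₁ ^ l * w ^ l + μ₂ ^ l * (1-w) ^ l)) ^ (-1/l) *
              fV (μ₁ ^ l * w ^ l / (μ₁ ^ l * w ^ l + μ₂ ^ l * (1-w) ^ l)))) := by
    intro w hw
    obtain ⟨hw0, hw1⟩ := hw
    have h1w : 0 < 1 - w := by linarith
    have e1 : (w * μ₁) ^ l = μ₁ ^ l * w ^ l := by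
      rw [Real.mul_rpow hw0.le hμ₁pos.le, mul_comm]
    have e2 : (μ₁ * w) ^ l = μ₁ ^ l * w ^ l := Real.mul_rpow hμ₁pos.le hw0.le
    have e3 : ((1 - w) * μ₂) ^ l = μ₂ ^ l * (1-w) ^ l := by
      rw [Real.mul_rpow h1w.le hμ₂pos.le, mul_comm]
    have hupos : 0 < μ₁ ^ l * w ^ l := mul_pos hA (Real.rpow_pos_of_pos hw0 l)
    have hvpos : 0 < μ₂ ^ l * (1-w) ^ l := mul_pos hB (Real.rpow_pos_of_pos h1w l)
    have hSpos : 0 < μ₁ ^ l * w ^ l + μ₂ ^ l * (1-w) ^ l := by linarith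
    have hNpos : 0 < N (μ₁ ^ l * w ^ l) (μ₂ ^ l * (1-w) ^ l) := by
      refine lt_of_lt_of_le hupos (le_trans ?_ (hC2 _ _))
      exact le_trans (le_abs_self _) (le_max_left _ _)
    have hNLpos : 0 < N (μ₁ ^ l * w ^ l) (μ₂ ^ l * (1-w) ^ l) ^ (1/l) :=
      Real.rpow_pos_of_pos hNpos _
    have htauval : tau N (μ₁ ^ l * w ^ l / (μ₁ ^ l * w ^ l + μ₂ ^ l * (1-w) ^ l))
        = N (μ₁ ^ l * w ^ l) (μ₂ ^ l * (1-w) ^ l) / (μ₁ ^ l * w ^ l) := by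
      simp only [tau]
      have h1m : 1 - μ₁ ^ l * w ^ l / (μ₁ ^ l * w ^ l + μ₂ ^ l * (1-w) ^ l)
          = μ₂ ^ l * (1-w) ^ l / (μ₁ ^ l * w ^ l + μ₂ ^ l * (1-w) ^ l) := by
        field_simp
        ring
      rw [h1m]
      have hhom := hN.2.2.1 (μ₁ ^ l * w ^ l + μ₂ ^ l * (1-w) ^ l)⁻¹
        (μ₁ ^ l * w ^ l) (μ₂ ^ l * (1-w) ^ l)
      rw [abs_of_pos (inv_pos.mpr hSpos)] at hhom
      rw [show μ₁ ^ l * w ^ l / (μ₁ ^ l * w ^ l + μ₂ ^ l * (1-w) ^ l)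
          = (μ₁ ^ l * w ^ l + μ₂ ^ l * (1-w) ^ l)⁻¹ * (μ₁ ^ l * w ^ l) by ring,
        show μ₂ ^ l * (1-w) ^ l / (μ₁ ^ l * w ^ l + μ₂ ^ l * (1-w) ^ l)
          = (μ₁ ^ l * w ^ l + μ₂ ^ l * (1-w) ^ l)⁻¹ * (μ₂ ^ l * (1-w) ^ l) by ring,
        hhom]
      rw [div_eq_div_iff (by positivity) hupos.ne']
      ring
    have hurt : (μ₁ ^ l * w ^ l) ^ (1/l) = μ₁ * w := by
      rw [Real.mul_rpow hA.le (Real.rpow_nonneg hw0.le l),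
        ← Real.rpow_mul hμ₁pos.le, ← Real.rpow_mul hw0.le,
        mul_one_div_cancel hl.ne', Real.rpow_one, Real.rpow_one]
    have htaupow : tau N (μ₁ ^ l * w ^ l / (μ₁ ^ l * w ^ l + μ₂ ^ l * (1-w) ^ l)) ^ (-1/l)
        = μ₁ * w / N (μ₁ ^ l * w ^ l) (μ₂ ^ l * (1-w) ^ l) ^ (1/l) := by
      rw [htauval, neg_div, Real.rpow_neg (div_nonneg hNpos.le hupos.le),
        Real.div_rpow hNpos.le hupos.le, hurt, inv_div]
    have hlpow1 : l ^ (1 - 1/l) = l * l ^ (-1/l) := by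
      rw [show (1 - 1/l : ℝ) = 1 + (-1/l) by ring, Real.rpow_add hl, Real.rpow_one]
    simp only [specDens]
    rw [e1, e2, e3, htaupow, hlpow1]
    field_simp
  rw [setIntegral_congr_fun measurableSet_Ioo hpt, MeasureTheory.integral_const_mul]
  have hcov := cov l (μ₁ ^ l) (μ₂ ^ l) hl hA hB
    (fun v => tau N v ^ (-1/l) * fV v)
  rw [← hcov, ← MeasureTheory.integral_Icc_eq_integral_Ioo]
  have hI : ∫ v in Set.Icc (0:ℝ) 1, tau N v ^ (-1/l) * fV v = μ₁ / l ^ (-1/l) := by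
    rw [hμ₁]
    field_simp
  rw [hI]
  field_simp

/-- moment constraint of Remark 1: for `λ > 0` and a
probability density `f_V` on `[0,1]`, the spectral density `h(·; λ, f_V)`
satisfies `∫₀¹ w h(w; λ, f_V) dw = 1/2`, even if `∫₀¹ v f_V(v) dv ≠ 1/2`. -/
theorem stmt17 (N : ℝ → ℝ → ℝ) (hN : IsNorm2 N) (hC1 : CondC1 N) (hC2 : CondC2 N)
    (hC3 : CondC3 N) (l : ℝ) (hl : 0 < l) (fV : ℝ → ℝ)
    (hfV_nonneg : ∀ v, 0 ≤ fV v)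
    (hfV_int : IntegrableOn fV (Set.Icc (0:ℝ) 1))
    (hfV_one : ∫ v in Set.Icc (0:ℝ) 1, fV v = 1)
    (μ₁ μ₂ : ℝ)
    (hμ₁ : μ₁ = l ^ (-1 / l) * ∫ v in Set.Icc (0:ℝ) 1, tau N v ^ (-1 / l) * fV v)
    (hμ₂ : μ₂ = l ^ (-1 / l) *
      ∫ v in Set.Icc (0:ℝ) 1, tau N (1 - v) ^ (-1 / l) * fV v) :
    ∫ w in Set.Ioo (0:ℝ) 1, w * specDens N l fV μ₁ μ₂ w = 1 / 2 :=
  stmt17' N hN hC2 l hl fV hfV_nonneg hfV_int hfV_one μ₁ μ₂ hμ₁ hμ₂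
end
end
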